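/- arXiv:1411.6887 — 5 statements merged into one kernel-verified Lean document; each statement's English description precedes it below -/
import Mathlib

section
/- Let G be an entirely looped graph with loops and let H₁, H₂ be graphs with loops such that N(H₁) is isomorphic to N(H₂). Then G □ H₁ is isomorphic to G □ H₂. -/
universe u

/-- A graph with loops on a vertex type `V`: a symmetric binary relation. -/
structure LoopGraph (V : Type*) where
  adj : V → V → Prop
  symm : ∀ u v, adj u v → adj v u

namespace LoopGraph

/-- The Cartesian product `G □ H` of two graphs with loops. -/
def box {V W : Type*} (G : LoopGraph V) (H : LoopGraph W) : LoopGraph (V × W) where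
  adj p q := (G.adj p.1 q.1 ∧ p.2 = q.2) ∨ (p.1 = q.1 ∧ H.adj p.2 q.2)
  symm p q h := by
    rcases h with ⟨h, e⟩ | ⟨e, h⟩
    · exact Or.inl ⟨G.symm _ _ h, e.symm⟩
    · exact Or.inr ⟨e.symm, H.symm _ _ h⟩

/-- The Cartesian product `□_i G i` of a finite family of graphs with loops. -/
def boxPi {k : ℕ} {V : Fin k → Type*} (G : ∀ i, LoopGraph (V i)) :
    LoopGraph (∀ i, V i) where
  adj x y := ∃ i, (G i).adj (x i) (y i) ∧ ∀ j, j ≠ i → x j = y j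
  symm x y h := by
    obtain ⟨i, h1, h2⟩ := h
    exact ⟨i, (G i).symm _ _ h1, fun j hj => (h2 j hj).symm⟩

/-- Two graphs with loops are isomorphic if there is a bijection of the vertex
types preserving and reflecting adjacency. -/
def IsIsomorphic {V W : Type*} (G : LoopGraph V) (H : LoopGraph W) : Prop :=
  ∃ φ : V ≃ W, ∀ u v, G.adj u v ↔ H.adj (φ u) (φ v)

/-- `N G` is `G` with its loops removed, as a simple graph. -/
def N {V : Type*} (G : LoopGraph V) : SimpleGraph V where
  Adj u v := u ≠ v ∧ G.adj u v
  symm := ⟨fun _ _ h => ⟨h.1.symm, G.symm _ _ h.2⟩⟩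
  loopless := ⟨fun _ h => h.1 rfl⟩

/-- `G` with its loops removed, as a graph with loops. -/
def removeLoops {V : Type*} (G : LoopGraph V) : LoopGraph V where
  adj u v := u ≠ v ∧ G.adj u v
  symm u v h := ⟨h.1.symm, G.symm _ _ h.2⟩

/-- `G` with a loop attached to every vertex. -/
def fullLoops {V : Type*} (G : LoopGraph V) : LoopGraph V where
  adj u v := G.adj u v ∨ u = v
  symm u v h := by
    rcases h with h | h
    · exact Or.inl (G.symm _ _ h)
    · exact Or.inr h.symm

/-- A graph with loops is trivial if it has exactly one vertex and no loop. -/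
def IsTrivial {V : Type*} (G : LoopGraph V) : Prop :=
  (∃ v : V, ∀ w : V, w = v) ∧ ∀ v, ¬ G.adj v v

/-- A nontrivial connected graph with loops with at least one unlooped vertex is
irreducible if in every factorization into two factors, one factor is trivial. -/
def Irreducible {V : Type u} (G : LoopGraph V) : Prop :=
  ¬ G.IsTrivial ∧ G.N.Connected ∧ (∃ v, ¬ G.adj v v) ∧
    ∀ (W L : Type u) (H : LoopGraph W) (K : LoopGraph L),
      G.IsIsomorphic (H.box K) → H.IsTrivial ∨ K.IsTrivial

/-- A set of vertices is convex if every shortest walk (in `N G`) between two of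
its vertices stays inside the set. -/
def ConvexSet {V : Type*} (G : LoopGraph V) (S : Set V) : Prop :=
  ∀ u ∈ S, ∀ v ∈ S, ∀ p : G.N.Walk u v,
    p.length = G.N.dist u v → ∀ x ∈ p.support, x ∈ S

/-- The disjoint union of two graphs with loops. -/
def disjUnion {W U : Type*} (H : LoopGraph W) (K : LoopGraph U) :
    LoopGraph (W ⊕ U) where
  adj x y := Sum.LiftRel H.adj K.adj x y
  symm x y h := by
    cases h with
    | inl h => exact Sum.LiftRel.inl (H.symm _ _ h)
    | inr h => exact Sum.LiftRel.inr (K.symm _ _ h)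

/-- The trivial graph `K₁`: one vertex, no loop. -/
def K1 : LoopGraph PUnit := ⟨fun _ _ => False, fun _ _ h => h.elim⟩

/-- The single looped vertex `K₁*`. -/
def K1star : LoopGraph PUnit := ⟨fun _ _ => True, fun _ _ _ => trivial⟩

/-- The 0/1 adjacency matrix of a graph with loops. -/
def adjMatrix {V : Type*} (G : LoopGraph V) [DecidableRel G.adj] : Matrix V V ℕ :=
  Matrix.of fun u v => if G.adj u v then 1 else 0

end LoopGraph

/-- If `G` is entirely looped and `N(H₁) ≅ N(H₂)`, then
`G □ H₁ ≅ G □ H₂`. -/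
theorem box_iso_of_removeLoops_iso {V W₁ W₂ : Type*}
    (G : LoopGraph V) (H₁ : LoopGraph W₁) (H₂ : LoopGraph W₂)
    (hG : ∀ v, G.adj v v)
    (h : H₁.removeLoops.IsIsomorphic H₂.removeLoops) :
    (G.box H₁).IsIsomorphic (G.box H₂) := by
  obtain ⟨φ, hφ⟩ := h
  refine ⟨(Equiv.refl V).prodCongr φ, ?_⟩
  rintro ⟨v, w⟩ ⟨v', w'⟩
  simp only [LoopGraph.box, LoopGraph.removeLoops, Equiv.prodCongr_apply, Equiv.refl_apply,
    Prod.map] at hφ ⊢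
  by_cases hw : w = w'
  · subst hw
    constructor
    · rintro (⟨hg, _⟩ | ⟨rfl, _⟩)
      · exact Or.inl ⟨hg, rfl⟩
      · exact Or.inl ⟨hG v, rfl⟩
    · rintro (⟨hg, he⟩ | ⟨rfl, _⟩)
      · exact Or.inl ⟨hg, rfl⟩
      · exact Or.inl ⟨hG v, rfl⟩
  · have hφw : φ w ≠ φ w' := fun e => hw (φ.injective e)
    constructor
    · rintro (⟨hg, he⟩ | ⟨rfl, hh⟩)
      · exact absurd he hw
      · exact Or.inr ⟨rfl, ((hφ w w').mp ⟨hw, hh⟩).2⟩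
    · rintro (⟨hg, he⟩ | ⟨rfl, hh⟩)
      · exact absurd he hφw
      · exact Or.inr ⟨rfl, ((hφ w w').mpr ⟨hφw, hh⟩).2⟩
end

section
/- (Convex subgraphs of products are boxes.) Let (G i)_{i : Fin k} be a finite family of finite connected graphs with loops and let S be a nonempty set of vertices of the Cartesian product □_i G i. Then S is convex in □_i G i if and only if S is the box of its projections, i.e., S = { x | ∀ i, x i ∈ p_i(S) } where p_i(S) = { x i | x ∈ S }, and each projection p_i(S) is convex in G i. -/
universe u

namespace LoopGraphAux

open SimpleGraph Finset LoopGraph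

open scoped Classical

variable {k : ℕ} {V : Fin k → Type*} (G : ∀ i, LoopGraph (V i))

lemma adj_coord {u w : ∀ j, V j} (h : (boxPi G).N.Adj u w) {i : Fin k}
    (hne : u i ≠ w i) : (G i).N.Adj (u i) (w i) := by
  obtain ⟨hne', j, hadj, hoth⟩ := h
  rcases eq_or_ne i j with rfl | hij
  · exact ⟨hne, hadj⟩
  · exact absurd (hoth i hij) hne

lemma adj_exists_unique {u w : ∀ j, V j} (h : (boxPi G).N.Adj u w) :
    ∃ j, u j ≠ w j ∧ ∀ l, l ≠ j → u l = w l := by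
  obtain ⟨hne, j, hadj, hoth⟩ := h
  refine ⟨j, fun he => hne (funext fun l => ?_), hoth⟩
  rcases eq_or_ne l j with rfl | hl
  · exact he
  · exact hoth l hl

noncomputable def liftWalk (i : Fin k) (a : ∀ j, V j) :
    ∀ {x y : V i}, (G i).N.Walk x y →
      (boxPi G).N.Walk (Function.update a i x) (Function.update a i y)
  | _, _, .nil => .nil
  | x, _, .cons h q =>
    .cons (by
      refine ⟨fun he => h.1 ?_, i, by simpa using h.2,
        fun j hj => by simp [Function.update_of_ne hj]⟩
      have := congrFun he i
      simpa using this)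
      (liftWalk i a q)

@[simp] lemma liftWalk_length (i : Fin k) (a : ∀ j, V j) {x y : V i}
    (q : (G i).N.Walk x y) : (liftWalk G i a q).length = q.length := by
  induction q with
  | nil => rfl
  | cons h q ih => simp [liftWalk, ih]; exact congrArg (· + 1) ih

@[simp] lemma liftWalk_support (i : Fin k) (a : ∀ j, V j) {x y : V i}
    (q : (G i).N.Walk x y) :
    (liftWalk G i a q).support = q.support.map (Function.update a i) := by
  induction q with
  | nil => rfl
  | cons h q ih => simp [liftWalk, ih]; exact congrArg (_ :: ·) ih

noncomputable def projWalk (i : Fin k) :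
    ∀ {u v : ∀ j, V j}, (boxPi G).N.Walk u v → (G i).N.Walk (u i) (v i)
  | _, _, .nil => .nil
  | u, v, .cons (v := b) h q =>
    if e : u i = b i then (projWalk i q).copy e.symm rfl
    else .cons (adj_coord G h e) (projWalk i q)

lemma projWalk_support (i : Fin k) {u v : ∀ j, V j} (p : (boxPi G).N.Walk u v) :
    ∀ x ∈ p.support, x i ∈ (projWalk G i p).support := by
  induction p with
  | nil => intro x hx; simp_all [projWalk]
  | @cons u b v h q ih =>
    intro x hx
    rcases List.mem_cons.mp (by simpa using hx) with rfl | hx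
    · by_cases e : x i = b i
      · simpa [projWalk, e] using e ▸ (projWalk G i q).start_mem_support
      · simp [projWalk, e]
    · by_cases e : u i = b i
      · simpa [projWalk, e] using ih x hx
      · simp only [projWalk, dif_neg e, Walk.support_cons]
        exact List.mem_cons_of_mem _ (ih x hx)

lemma projWalk_length_sum {u v : ∀ j, V j} (p : (boxPi G).N.Walk u v) :
    ∑ i, (projWalk G i p).length = p.length := by
  induction p with
  | nil => simp [projWalk]
  | @cons u b v h q ih =>
    obtain ⟨j, hj, hoth⟩ := adj_exists_unique G h
    have hlen : ∀ i, (projWalk G i (Walk.cons h q)).length =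
        (projWalk G i q).length + if i = j then 1 else 0 := by
      intro i
      by_cases e : u i = b i
      · have hij : i ≠ j := fun h' => hj (h' ▸ e)
        simp [projWalk, e, hij]
      · have hij : i = j := by
          by_contra h'; exact e (hoth i h')
        simp [projWalk, e, hij]
    simp [hlen, Finset.sum_add_distrib, ← ih]

lemma exists_walk_le (hconn : ∀ i, (G i).N.Connected) :
    ∀ (m : ℕ) (u v : ∀ j, V j), (∀ j : Fin k, m ≤ (j : ℕ) → u j = v j) →
      ∃ p : (boxPi G).N.Walk u v, p.length ≤ ∑ i, (G i).N.dist (u i) (v i) := by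
  intro m
  induction m with
  | zero =>
    intro u v h
    obtain rfl : u = v := funext fun j => h j (Nat.zero_le _)
    exact ⟨.nil, Nat.zero_le _⟩
  | succ m ih =>
    intro u v h
    by_cases hm : m < k
    · set i : Fin k := ⟨m, hm⟩ with hi
      set u' := Function.update u i (v i) with hu'
      obtain ⟨q, hq⟩ := ih u' v (fun j hj => by
        rcases eq_or_ne j i with rfl | hji
        · simp [hu']
        · have : j.val ≠ m := fun hh => hji (Fin.ext hh)
          rw [hu', Function.update_of_ne hji]
          exact h j (by omega))
      obtain ⟨r, hr⟩ := ((hconn i) (u i) (v i)).exists_walk_length_eq_dist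
      refine ⟨((liftWalk G i u r).copy (by simp) rfl).append q, ?_⟩
      have h0 : (G i).N.dist (u' i) (v i) = 0 := by simp [hu']
      have hsum : (G i).N.dist (u i) (v i) + ∑ l, (G l).N.dist (u' l) (v l) =
          ∑ l, (G l).N.dist (u l) (v l) := by
        rw [← Finset.add_sum_erase _ _ (Finset.mem_univ i),
            ← Finset.add_sum_erase _ (fun l => (G l).N.dist (u l) (v l)) (Finset.mem_univ i),
            h0, zero_add]
        congr 1
        exact Finset.sum_congr rfl fun l hl => by
          rw [hu', Function.update_of_ne (Finset.mem_erase.mp hl).1]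
      calc (((liftWalk G i u r).copy (by simp) rfl).append q).length
          = (G i).N.dist (u i) (v i) + q.length := by simp [hr]
        _ ≤ (G i).N.dist (u i) (v i) + ∑ l, (G l).N.dist (u' l) (v l) := by omega
        _ = _ := hsum
    · exact ih u v (fun j hj => absurd j.isLt (by omega))

lemma boxPi_reachable (hconn : ∀ i, (G i).N.Connected) (u v : ∀ j, V j) : (boxPi G).N.Reachable u v := by
  obtain ⟨p, -⟩ := exists_walk_le G hconn k u v (fun j hj => absurd j.isLt (by omega))
  exact ⟨p⟩

lemma dist_boxPi (hconn : ∀ i, (G i).N.Connected) (u v : ∀ j, V j) :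
    (boxPi G).N.dist u v = ∑ i, (G i).N.dist (u i) (v i) := by
  refine le_antisymm ?_ ?_
  · obtain ⟨p, hp⟩ := exists_walk_le G hconn k u v (fun j hj => absurd j.isLt (by omega))
    exact le_trans (SimpleGraph.dist_le p) hp
  · obtain ⟨p, hp⟩ := (boxPi_reachable G hconn u v).exists_walk_length_eq_dist
    rw [← hp, ← projWalk_length_sum G p]
    exact Finset.sum_le_sum fun i _ => SimpleGraph.dist_le _

lemma convex_mem_between (hconn : ∀ i, (G i).N.Connected) {S : Set (∀ j, V j)} (hc : (boxPi G).ConvexSet S)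
    {a b c : ∀ j, V j} (ha : a ∈ S) (hb : b ∈ S)
    (h : (boxPi G).N.dist a c + (boxPi G).N.dist c b = (boxPi G).N.dist a b) :
    c ∈ S := by
  obtain ⟨p, hp⟩ := (boxPi_reachable G hconn a c).exists_walk_length_eq_dist
  obtain ⟨q, hq⟩ := (boxPi_reachable G hconn c b).exists_walk_length_eq_dist
  refine hc a ha b hb (p.append q) (by simp [hp, hq, h]) c ?_
  rw [Walk.support_append]
  exact List.mem_append_left _ p.end_mem_support

lemma update_mem (hconn : ∀ i, (G i).N.Connected) {S : Set (∀ j, V j)} (hc : (boxPi G).ConvexSet S)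
    {a s : ∀ j, V j} (ha : a ∈ S) (hs : s ∈ S) (i : Fin k) :
    Function.update a i (s i) ∈ S := by
  refine convex_mem_between G hconn hc ha hs ?_
  rw [dist_boxPi G hconn, dist_boxPi G hconn, dist_boxPi G hconn,
    ← Finset.sum_add_distrib]
  refine Finset.sum_congr rfl fun j _ => ?_
  rcases eq_or_ne j i with rfl | hj
  · simp
  · simp [Function.update_of_ne hj]

end LoopGraphAux

/-- Convex subgraphs of products are boxes: a nonempty vertex set
`S` of `□_i G i` is convex iff `S` is the box of its projections and every
projection is convex. -/
theorem convexSet_iff_box {k : ℕ} {V : Fin k → Type*} [∀ i, Fintype (V i)]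
    (G : ∀ i, LoopGraph (V i)) (hconn : ∀ i, (G i).N.Connected)
    (S : Set (∀ i, V i)) (hS : S.Nonempty) :
    (LoopGraph.boxPi G).ConvexSet S ↔
      (S = {x | ∀ i, x i ∈ (fun y => y i) '' S} ∧
        ∀ i, (G i).ConvexSet ((fun y => y i) '' S)) := by
  classical
  constructor
  · intro hc
    have hbox : S = {x | ∀ i, x i ∈ (fun y => y i) '' S} := by
      apply Set.Subset.antisymm
      · intro x hx i
        exact ⟨x, hx, rfl⟩
      · intro x hx
        have key : ∀ m : ℕ, ∃ a ∈ S, ∀ j : Fin k, (j : ℕ) < m → a j = x j := by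
          intro m
          induction m with
          | zero =>
            obtain ⟨a, ha⟩ := hS
            exact ⟨a, ha, fun j hj => absurd hj (by omega)⟩
          | succ m ih =>
            obtain ⟨a, ha, hagree⟩ := ih
            by_cases hm : m < k
            · set i : Fin k := ⟨m, hm⟩ with hi
              obtain ⟨s, hsS, hsx⟩ := hx i
              refine ⟨Function.update a i (s i),
                LoopGraphAux.update_mem G hconn hc ha hsS i, fun j hj => ?_⟩
              rcases eq_or_ne j i with rfl | hji
              · simpa using hsx
              · rw [Function.update_of_ne hji]
                have hjm : (j : ℕ) ≠ m := fun hh => hji (Fin.ext hh)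
                exact hagree j (by omega)
            · exact ⟨a, ha, fun j _ => hagree j (by have := j.isLt; omega)⟩
        obtain ⟨a, ha, hagree⟩ := key k
        have hax : a = x := funext fun j => hagree j j.isLt
        exact hax ▸ ha
    refine ⟨hbox, fun i => ?_⟩
    intro u' hu' v' hv' q hq y hy
    obtain ⟨a, haS, hau⟩ := hu'
    obtain ⟨b, hbS, hbv⟩ := hv'
    have hcS : Function.update a i (b i) ∈ S :=
      LoopGraphAux.update_mem G hconn hc haS hbS i
    set q' : (G i).N.Walk (a i) (b i) := q.copy hau.symm hbv.symm with hq'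
    set p : (LoopGraph.boxPi G).N.Walk a (Function.update a i (b i)) :=
      (LoopGraphAux.liftWalk G i a q').copy (by simp) rfl with hp
    have hplen : p.length = (LoopGraph.boxPi G).N.dist a (Function.update a i (b i)) := by
      rw [LoopGraphAux.dist_boxPi G hconn]
      rw [Finset.sum_eq_single i (fun j _ hj => by simp [Function.update_of_ne hj])
        (by simp)]
      simp [hp, hq', hq, hau, hbv]
    have hyS : Function.update a i y ∈ S := by
      refine hc a haS _ hcS p hplen (Function.update a i y) ?_
      rw [hp]
      simp only [SimpleGraph.Walk.support_copy, LoopGraphAux.liftWalk_support]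
      refine List.mem_map.mpr ⟨y, ?_, rfl⟩
      simpa [hq'] using hy
    exact ⟨Function.update a i y, hyS, by simp⟩
  · rintro ⟨hbox, hcv⟩
    intro u hu v hv p hp x hx
    rw [hbox]
    intro i
    have hsum : ∑ j, (G j).N.dist (u j) (v j) = ∑ j, (LoopGraphAux.projWalk G j p).length := by
      rw [LoopGraphAux.projWalk_length_sum, hp, LoopGraphAux.dist_boxPi G hconn]
    have heq := (Finset.sum_eq_sum_iff_of_le
      (fun j _ => SimpleGraph.dist_le (LoopGraphAux.projWalk G j p))).mp hsum
    exact hcv i (u i) ⟨u, hu, rfl⟩ (v i) ⟨v, hv, rfl⟩ (LoopGraphAux.projWalk G i p)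
      ((heq i (Finset.mem_univ i)).symm) (x i) (LoopGraphAux.projWalk_support G i p x hx)
end

section
/- (Existence of prime factorizations.) Every nontrivial, connected finite graph with loops G having at least one unlooped vertex is isomorphic to a Cartesian product □_{i : Fin k} G i (k ≥ 1) in which every factor G i is irreducible. -/
universe u

namespace LoopGraph

open SimpleGraph

section Aux

/-- Map reachability along a function that sends edges to edges or to equal vertices. -/
lemma reach_map {V W : Type*} {A : SimpleGraph V} {B : SimpleGraph W} (f : V → W)
    (hf : ∀ u v, A.Adj u v → B.Adj (f u) (f v) ∨ f u = f v) :
    ∀ {a b : V}, A.Reachable a b → B.Reachable (f a) (f b) := by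
  intro a b h
  obtain ⟨p⟩ := h
  induction p with
  | nil => exact SimpleGraph.Reachable.refl _
  | cons h p ih =>
    rcases hf _ _ h with h' | h'
    · exact h'.reachable.trans ih
    · rw [h']; exact ih

lemma iso_refl {V : Type*} (G : LoopGraph V) : G.IsIsomorphic G :=
  ⟨Equiv.refl V, fun _ _ => Iff.rfl⟩

lemma iso_symm {V W : Type*} {G : LoopGraph V} {H : LoopGraph W}
    (h : G.IsIsomorphic H) : H.IsIsomorphic G := by
  obtain ⟨φ, hφ⟩ := h
  refine ⟨φ.symm, fun u v => ?_⟩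
  rw [hφ (φ.symm u) (φ.symm v), Equiv.apply_symm_apply, Equiv.apply_symm_apply]

lemma iso_trans {V W U : Type*} {G : LoopGraph V} {H : LoopGraph W} {K : LoopGraph U}
    (h1 : G.IsIsomorphic H) (h2 : H.IsIsomorphic K) : G.IsIsomorphic K := by
  obtain ⟨φ, hφ⟩ := h1
  obtain ⟨ψ, hψ⟩ := h2
  exact ⟨φ.trans ψ, fun u v => (hφ u v).trans (hψ _ _)⟩

lemma box_congr {V W V' W' : Type*} {G : LoopGraph V} {H : LoopGraph W}
    {G' : LoopGraph V'} {H' : LoopGraph W'}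
    (h1 : G.IsIsomorphic G') (h2 : H.IsIsomorphic H') :
    (G.box H).IsIsomorphic (G'.box H') := by
  obtain ⟨φ, hφ⟩ := h1
  obtain ⟨ψ, hψ⟩ := h2
  refine ⟨Equiv.prodCongr φ ψ, ?_⟩
  rintro ⟨a, x⟩ ⟨b, y⟩
  simp only [box, Equiv.prodCongr_apply, Prod.map, hφ, hψ,
    EmbeddingLike.apply_eq_iff_eq]

lemma box_assoc {V W U : Type*} (A : LoopGraph V) (B : LoopGraph W) (C : LoopGraph U) :
    ((A.box B).box C).IsIsomorphic (A.box (B.box C)) := by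
  refine ⟨Equiv.prodAssoc V W U, ?_⟩
  rintro ⟨⟨a, b⟩, c⟩ ⟨⟨a', b'⟩, c'⟩
  simp only [box, Equiv.prodAssoc_apply, Prod.ext_iff]
  tauto

lemma N_connected_of_iso {V W : Type*} {G : LoopGraph V} {H : LoopGraph W}
    (h : G.IsIsomorphic H) (hc : G.N.Connected) : H.N.Connected := by
  obtain ⟨φ, hφ⟩ := h
  haveI := hc.nonempty
  haveI : Nonempty W := ⟨φ (Classical.arbitrary V)⟩
  refine ⟨fun u v => ?_⟩
  have hr := hc.preconnected (φ.symm u) (φ.symm v)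
  have := reach_map (A := G.N) (B := H.N) φ
    (fun a b hab => Or.inl ⟨fun e => hab.1 (φ.injective e), (hφ a b).1 hab.2⟩) hr
  simpa using this

lemma connected_fst {W U : Type*} {H : LoopGraph W} {K : LoopGraph U}
    (hc : (H.box K).N.Connected) : H.N.Connected := by
  haveI := hc.nonempty
  haveI : Nonempty W := ⟨(Classical.arbitrary (W × U)).1⟩
  haveI : Nonempty U := ⟨(Classical.arbitrary (W × U)).2⟩
  refine ⟨fun u v => ?_⟩
  have hr := hc.preconnected (u, Classical.arbitrary U) (v, Classical.arbitrary U)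
  have := reach_map (A := (H.box K).N) (B := H.N) Prod.fst ?_ hr
  · exact this
  · rintro a b ⟨hne, hadj | hadj⟩
    · exact Or.inl ⟨fun e => hne (Prod.ext e hadj.2), hadj.1⟩
    · exact Or.inr hadj.1

lemma box_comm {V W : Type*} (G : LoopGraph V) (H : LoopGraph W) :
    (G.box H).IsIsomorphic (H.box G) := by
  refine ⟨Equiv.prodComm V W, ?_⟩
  rintro ⟨a, x⟩ ⟨b, y⟩
  simp only [box, Equiv.prodComm_apply, Prod.swap]
  tauto

lemma connected_snd {W U : Type*} {H : LoopGraph W} {K : LoopGraph U}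
    (hc : (H.box K).N.Connected) : K.N.Connected :=
  connected_fst (N_connected_of_iso (box_comm H K) hc)

lemma unlooped_of_iso {V W : Type*} {G : LoopGraph V} {H : LoopGraph W}
    (h : G.IsIsomorphic H) (hu : ∃ v, ¬ G.adj v v) : ∃ w, ¬ H.adj w w := by
  obtain ⟨φ, hφ⟩ := h
  obtain ⟨v, hv⟩ := hu
  exact ⟨φ v, fun hw => hv ((hφ v v).2 hw)⟩

lemma isTrivial_of_iso {V W : Type*} {G : LoopGraph V} {H : LoopGraph W}
    (h : G.IsIsomorphic H) (ht : G.IsTrivial) : H.IsTrivial := by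
  obtain ⟨φ, hφ⟩ := h
  obtain ⟨⟨v0, hv0⟩, hl⟩ := ht
  refine ⟨⟨φ v0, fun w => ?_⟩, fun w hw => ?_⟩
  · have := hv0 (φ.symm w)
    rw [← this, Equiv.apply_symm_apply]
  · have : G.adj (φ.symm w) (φ.symm w) := by
      rw [hφ (φ.symm w) (φ.symm w), Equiv.apply_symm_apply]; exact hw
    exact hl _ this

lemma not_isTrivial_of_pair {V : Type*} {G : LoopGraph V}
    (h : ∃ x y : V, x ≠ y) : ¬ G.IsTrivial := by
  rintro ⟨⟨v, hv⟩, -⟩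
  obtain ⟨x, y, hxy⟩ := h
  exact hxy ((hv x).trans (hv y).symm)

lemma two_le_card {V : Type*} [Fintype V] (G : LoopGraph V) (hne : Nonempty V)
    (hnt : ¬ G.IsTrivial) (hul : ∃ v, ¬ G.adj v v) : 2 ≤ Fintype.card V := by
  by_contra h
  push_neg at h
  have hs : ∀ w v : V, w = v := by
    have : Fintype.card V ≤ 1 := by omega
    intro w v
    exact Fintype.card_le_one_iff.mp this w v
  obtain ⟨v0, hv0⟩ := hul
  exact hnt ⟨⟨v0, fun w => hs w v0⟩, fun v hv => hv0 (hs v v0 ▸ hv)⟩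

/-- Unlooped vertices in a box product give unlooped vertices in each factor. -/
lemma unlooped_box {W U : Type*} {H : LoopGraph W} {K : LoopGraph U}
    (hu : ∃ p : W × U, ¬ (H.box K).adj p p) :
    (∃ a, ¬ H.adj a a) ∧ (∃ b, ¬ K.adj b b) := by
  obtain ⟨⟨a, b⟩, hp⟩ := hu
  exact ⟨⟨a, fun h => hp (Or.inl ⟨h, rfl⟩)⟩, ⟨b, fun h => hp (Or.inr ⟨rfl, h⟩)⟩⟩

/-- Our own cons on type families over `Fin`, with good definitional behaviour. -/
def consT {k : ℕ} (W0 : Type u) (W : Fin k → Type u) : Fin (k + 1) → Type u :=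
  fun i => match i with
  | ⟨0, _⟩ => W0
  | ⟨j + 1, h⟩ => W ⟨j, Nat.lt_of_succ_lt_succ h⟩

/-- Cons of a graph onto a family of graphs. -/
def consG {k : ℕ} {W0 : Type u} {W : Fin k → Type u}
    (H : LoopGraph W0) (F : ∀ i, LoopGraph (W i)) :
    ∀ i : Fin (k + 1), LoopGraph (consT W0 W i) :=
  fun i => match i with
  | ⟨0, _⟩ => H
  | ⟨j + 1, h⟩ => F ⟨j, Nat.lt_of_succ_lt_succ h⟩

/-- The equivalence between a product and the cons-ed pi type. -/
def consEquiv' {k : ℕ} (W0 : Type u) (W : Fin k → Type u) :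
    W0 × (∀ i, W i) ≃ ∀ i, consT W0 W i where
  toFun p i := match i with
    | ⟨0, _⟩ => p.1
    | ⟨j + 1, h⟩ => p.2 ⟨j, Nat.lt_of_succ_lt_succ h⟩
  invFun f := (f ⟨0, Nat.succ_pos k⟩, fun i => f ⟨i.val + 1, Nat.succ_lt_succ i.isLt⟩)
  left_inv p := rfl
  right_inv f := by
    funext i
    obtain ⟨j, hj⟩ := i
    cases j with
    | zero => rfl
    | succ j => rfl

lemma consG_irreducible {k : ℕ} {W0 : Type u} {W : Fin k → Type u}
    {H : LoopGraph W0} {F : ∀ i, LoopGraph (W i)}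
    (hH : H.Irreducible) (hF : ∀ i, (F i).Irreducible) :
    ∀ i, (consG H F i).Irreducible := by
  rintro ⟨j, hj⟩
  cases j with
  | zero => exact hH
  | succ j => exact hF ⟨j, Nat.lt_of_succ_lt_succ hj⟩

lemma box_boxPi_cons {k : ℕ} {W0 : Type u} {W : Fin k → Type u}
    (H : LoopGraph W0) (F : ∀ i, LoopGraph (W i)) :
    (H.box (boxPi F)).IsIsomorphic (boxPi (consG H F)) := by
  refine ⟨consEquiv' W0 W, ?_⟩
  rintro ⟨a, x⟩ ⟨b, y⟩
  constructor
  · rintro (⟨h, rfl⟩ | ⟨rfl, i, h, he⟩)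
    · refine ⟨⟨0, Nat.succ_pos k⟩, h, ?_⟩
      rintro ⟨j, hj⟩ hne
      cases j with
      | zero => exact absurd rfl hne
      | succ j => rfl
    · refine ⟨⟨i.val + 1, Nat.succ_lt_succ i.isLt⟩, ?_, ?_⟩
      · exact h
      · rintro ⟨j, hj⟩ hne
        cases j with
        | zero => rfl
        | succ j =>
          refine he ⟨j, Nat.lt_of_succ_lt_succ hj⟩ (fun e => hne ?_)
          exact Fin.ext (by rw [← e])
  · rintro ⟨⟨j, hj⟩, h, he⟩
    cases j with
    | zero =>
      left
      refine ⟨h, funext fun i => ?_⟩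
      refine he ⟨i.val + 1, Nat.succ_lt_succ i.isLt⟩ (fun e => ?_)
      have := congrArg Fin.val e
      simp at this
    | succ j =>
      right
      refine ⟨he ⟨0, Nat.succ_pos k⟩ (fun e => by have := congrArg Fin.val e; simp at this),
        ⟨j, Nat.lt_of_succ_lt_succ hj⟩, h, ?_⟩
      intro i hi
      refine he ⟨i.val + 1, Nat.succ_lt_succ i.isLt⟩ (fun e => hi ?_)
      rw [Fin.mk_eq_mk] at e
      exact Fin.ext (show i.val = j by omega)

/-- The one-factor product: `G` is isomorphic to the box product of the single
family constantly `G` over `Fin 1`. -/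
lemma boxPi_single {V : Type u} (G : LoopGraph V) :
    G.IsIsomorphic (boxPi (fun _ : Fin 1 => G)) := by
  refine ⟨(Equiv.funUnique (Fin 1) V).symm, ?_⟩
  intro u v
  constructor
  · intro h
    exact ⟨0, h, fun j hj => absurd (Subsingleton.elim j 0) hj⟩
  · rintro ⟨i, h, -⟩
    exact h

end Aux

end LoopGraph

namespace LoopGraph

theorem aux_factor : ∀ n : ℕ, ∀ (V : Type u) [iV : Fintype V] (G : LoopGraph V),
    Fintype.card V ≤ n → ¬ G.IsTrivial → G.N.Connected → (∃ v, ¬ G.adj v v) →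
    ∃ k : ℕ, 1 ≤ k ∧ ∃ (W : Fin k → Type u) (F : ∀ i, LoopGraph (W i)),
      (∀ i, (F i).Irreducible) ∧ G.IsIsomorphic (boxPi F) := by
  intro n
  induction n with
  | zero =>
    intro V iV G hcard hnt hconn hul
    haveI := hconn.nonempty
    have := Fintype.card_pos (α := V)
    omega
  | succ n ih =>
    intro V iV G hcard hnt hconn hul
    by_cases hirr : G.Irreducible
    · exact ⟨1, le_refl 1, fun _ => V, fun _ => G, fun _ => hirr, boxPi_single G⟩
    · -- G factors nontrivially
      have hD : ¬ ∀ (W L : Type u) (H : LoopGraph W) (K : LoopGraph L),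
          G.IsIsomorphic (H.box K) → H.IsTrivial ∨ K.IsTrivial := by
        intro hd
        exact hirr ⟨hnt, hconn, hul, hd⟩
      push_neg at hD
      set S : Set ℕ := {m | ∃ (W U : Type u) (H : LoopGraph W) (K : LoopGraph U)
        (iW : Fintype W), G.IsIsomorphic (H.box K) ∧ ¬ H.IsTrivial ∧ ¬ K.IsTrivial ∧
        @Fintype.card W iW = m} with hSdef
      have hSne : S.Nonempty := by
        obtain ⟨W, U, H, K, hiso, hHK1, hHK2⟩ := hD
        obtain ⟨φ, hφ⟩ := hiso
        haveI := hconn.nonempty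
        haveI : Nonempty U := ⟨(φ (Classical.arbitrary V)).2⟩
        haveI : Nonempty W := ⟨(φ (Classical.arbitrary V)).1⟩
        letI : DecidableEq W := Classical.decEq W
        letI iW : Fintype W := Fintype.ofSurjective (fun v => (φ v).1)
          (fun w => ⟨φ.symm (w, Classical.arbitrary U), by simp⟩)
        exact ⟨Fintype.card W, W, U, H, K, iW, ⟨φ, hφ⟩, hHK1, hHK2, rfl⟩
      obtain ⟨W, U, H, K, iW, hiso, hHt, hKt, hcardW⟩ := Nat.sInf_mem hSne
      haveI := iW
      obtain ⟨φ, hφ⟩ := hiso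
      haveI := hconn.nonempty
      haveI hNU : Nonempty U := ⟨(φ (Classical.arbitrary V)).2⟩
      haveI hNW : Nonempty W := ⟨(φ (Classical.arbitrary V)).1⟩
      letI : DecidableEq U := Classical.decEq U
      letI iU : Fintype U := Fintype.ofSurjective (fun v => (φ v).2)
        (fun u => ⟨φ.symm (Classical.arbitrary W, u), by simp⟩)
      have hiso' : G.IsIsomorphic (H.box K) := ⟨φ, hφ⟩
      have hboxconn : (H.box K).N.Connected := N_connected_of_iso hiso' hconn
      have hHconn := connected_fst hboxconn
      have hKconn := connected_snd hboxconn
      have hulbox := unlooped_of_iso hiso' hul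
      obtain ⟨hulH, hulK⟩ := unlooped_box hulbox
      have hcardV : Fintype.card V = Fintype.card W * Fintype.card U := by
        rw [← Fintype.card_prod]
        exact Fintype.card_congr φ
      have hW2 : 2 ≤ Fintype.card W := two_le_card H hNW hHt hulH
      have hU2 : 2 ≤ Fintype.card U := two_le_card K hNU hKt hulK
      -- H is irreducible, by minimality of `card W`
      have hHirr : H.Irreducible := by
        refine ⟨hHt, hHconn, hulH, ?_⟩
        intro A B HA HB hAB
        by_contra hcon
        rw [not_or] at hcon
        obtain ⟨hAt, hBt⟩ := hcon
        obtain ⟨ψ, hψ⟩ := hAB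
        haveI : Nonempty A := ⟨(ψ (Classical.arbitrary W)).1⟩
        haveI : Nonempty B := ⟨(ψ (Classical.arbitrary W)).2⟩
        letI : DecidableEq A := Classical.decEq A
        letI : DecidableEq B := Classical.decEq B
        letI iA : Fintype A := Fintype.ofSurjective (fun w => (ψ w).1)
          (fun a => ⟨ψ.symm (a, Classical.arbitrary B), by simp⟩)
        letI iB : Fintype B := Fintype.ofSurjective (fun w => (ψ w).2)
          (fun b => ⟨ψ.symm (Classical.arbitrary A, b), by simp⟩)
        obtain ⟨hulA, hulB⟩ := unlooped_box (unlooped_of_iso ⟨ψ, hψ⟩ hulH)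
        have hB2 : 2 ≤ Fintype.card B := two_le_card HB ‹_› hBt hulB
        have hcardWA : Fintype.card W = Fintype.card A * Fintype.card B := by
          rw [← Fintype.card_prod]; exact Fintype.card_congr ψ
        have hWS : Fintype.card W = sInf S :=
          (congrArg (fun i => @Fintype.card W i) (Subsingleton.elim _ iW)).trans hcardW
        have hGiso : G.IsIsomorphic (HA.box (HB.box K)) :=
          iso_trans (iso_trans hiso' (box_congr ⟨ψ, hψ⟩ (iso_refl K))) (box_assoc HA HB K)
        have hBKnt : ¬ (HB.box K).IsTrivial := by
          apply not_isTrivial_of_pair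
          obtain ⟨b1, b2, hb⟩ :=
            Fintype.exists_pair_of_one_lt_card (α := B) (by omega)
          exact ⟨(b1, Classical.arbitrary U), (b2, Classical.arbitrary U),
            fun e => hb (congrArg Prod.fst e)⟩
        have hmem : Fintype.card A ∈ S :=
          ⟨A, B × U, HA, HB.box K, iA, hGiso, hAt, hBKnt, rfl⟩
        have hle := Nat.sInf_le hmem
        have hA1 : 1 ≤ Fintype.card A := Fintype.card_pos
        have hmul : Fintype.card A * 2 ≤ Fintype.card A * Fintype.card B :=
          Nat.mul_le_mul_left _ hB2
        omega
      -- recurse on K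
      have hmul2 : 2 * Fintype.card U ≤ Fintype.card W * Fintype.card U :=
        Nat.mul_le_mul_right _ hW2
      have hcardU : Fintype.card U ≤ n := by omega
      obtain ⟨k, hk1, W2, F, hFirr, hKiso⟩ := ih U K hcardU hKt hKconn hulK
      refine ⟨k + 1, by omega, consT W W2, consG H F, consG_irreducible hHirr hFirr, ?_⟩
      exact iso_trans (iso_trans hiso' (box_congr (iso_refl H) hKiso)) (box_boxPi_cons H F)

end LoopGraph

/-- Existence of prime factorizations: every nontrivial, connected
finite graph with loops with at least one unlooped vertex is isomorphic to a
Cartesian product of irreducible graphs. -/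
theorem prime_factorization_exists {V : Type u} [Fintype V] (G : LoopGraph V)
    (hnt : ¬ G.IsTrivial) (hconn : G.N.Connected) (hul : ∃ v, ¬ G.adj v v) :
    ∃ k : ℕ, 1 ≤ k ∧
      ∃ (W : Fin k → Type u) (F : ∀ i, LoopGraph (W i)),
        (∀ i, (F i).Irreducible) ∧ G.IsIsomorphic (LoopGraph.boxPi F) := by
  exact LoopGraph.aux_factor (Fintype.card V) V G le_rfl hnt hconn hul
end

section
/- (Isomorphisms permute layers.) Let φ be an isomorphism between nontrivial, connected finite graphs with loops G and H, each with at least one unlooped vertex, where G = □_{i : Fin k} G i and H = □_{j : Fin ℓ} H j are Cartesian products of irreducible graphs. Then k = ℓ, and for every unlooped vertex a of G there is a permutation π of Fin k such that for every i, φ maps the i-th layer of G through a onto the π(i)-th layer of H through φ(a): φ({ x | x j = a j for all j ≠ i }) = { y | y j = (φ a) j for all j ≠ π(i) }. -/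
universe u

namespace LoopGraph

open SimpleGraph Finset

section Walks

variable {k : ℕ} {V : Fin k → Type u} (F : ∀ i, LoopGraph (V i))

lemma adj_coord {x y : ∀ i, V i} (h : (boxPi F).N.Adj x y) :
    ∃ i, x i ≠ y i ∧ (F i).adj (x i) (y i) ∧ ∀ j, j ≠ i → x j = y j := by
  obtain ⟨hne, i, hadj, heq⟩ : _ ≠ _ ∧ _ := h
  refine ⟨i, fun hxy => hne ?_, hadj, heq⟩
  funext j
  by_cases hj : j = i
  · subst hj; exact hxy
  · exact heq j hj

/-- Any walk in the product projects to walks in the coordinates, with lengths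
summing to at most the total length. -/
lemma exists_proj {x y : ∀ i, V i} (p : (boxPi F).N.Walk x y) :
    ∃ f : Fin k → ℕ, (∑ j, f j ≤ p.length) ∧
      (∀ j, ∃ q : (F j).N.Walk (x j) (y j), q.length = f j) ∧
      (∀ j, f j = 0 → ∀ z ∈ p.support, z j = x j) := by
  induction p with
  | nil =>
    refine ⟨fun _ => 0, by simp, fun j => ⟨SimpleGraph.Walk.nil, rfl⟩, ?_⟩
    intro j _ z hz
    simp only [SimpleGraph.Walk.support_nil, List.mem_singleton] at hz
    subst hz; rfl
  | @cons x z y h p ih =>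
    obtain ⟨f', hsum, hw, hzero⟩ := ih
    obtain ⟨i, hne, hadj, heq⟩ := adj_coord F h
    refine ⟨fun j => f' j + if j = i then 1 else 0, ?_, ?_, ?_⟩
    · calc ∑ j, (f' j + if j = i then 1 else 0)
          = (∑ j, f' j) + ∑ j, (if j = i then 1 else 0) := Finset.sum_add_distrib
        _ ≤ p.length + 1 := by
            have h1 : (∑ j, if j = i then (1:ℕ) else 0) = 1 := by simp
            rw [h1]
            exact Nat.add_le_add_right hsum 1
        _ = (SimpleGraph.Walk.cons h p).length := by simp
    · intro j
      by_cases hj : j = i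
      · subst hj
        obtain ⟨q, hq⟩ := hw j
        exact ⟨SimpleGraph.Walk.cons (show (F j).N.Adj (x j) (z j) from And.intro hne hadj) q, by simp [hq]⟩
      · obtain ⟨q, hq⟩ := hw j
        refine ⟨q.copy (heq j hj).symm rfl, by simp [hq, hj]⟩
    · intro j hj
      have hji : j ≠ i := by
        intro hji; subst hji; simp at hj
      have hf' : f' j = 0 := by
        simp only [if_neg hji, add_zero] at hj
        exact hj
      intro w hw'
      simp only [SimpleGraph.Walk.support_cons, List.mem_cons] at hw'
      rcases hw' with rfl | hw'
      · rfl
      · rw [hzero j (by simpa using hf') w hw', heq j hji]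

lemma sum_dist_le {x y : ∀ i, V i} (p : (boxPi F).N.Walk x y) :
    ∑ j, (F j).N.dist (x j) (y j) ≤ p.length := by
  obtain ⟨f, hsum, hw, _⟩ := exists_proj F p
  refine le_trans (Finset.sum_le_sum fun j _ => ?_) hsum
  obtain ⟨q, hq⟩ := hw j
  exact hq ▸ SimpleGraph.dist_le q

lemma exists_walk_update (i : Fin k) {u v : V i} (p : (F i).N.Walk u v) :
    ∀ x : ∀ m, V m, x i = u →
      ∃ q : (boxPi F).N.Walk x (Function.update x i v), q.length ≤ p.length := by
  induction p with
  | nil =>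
    intro x hx
    rw [← hx, Function.update_eq_self]
    exact ⟨SimpleGraph.Walk.nil, by simp⟩
  | @cons u c v h p ih =>
    intro x hx
    obtain ⟨q, hq⟩ := ih (Function.update x i c) (Function.update_self i c x)
    have hadj : (boxPi F).N.Adj x (Function.update x i c) := by
      show x ≠ _ ∧ (boxPi F).adj x _
      constructor
      · intro he
        have hc := congrFun he i
        rw [Function.update_self] at hc
        exact h.1 (hx.symm.trans hc)
      · exact ⟨i, by rw [Function.update_self, hx]; exact h.2,
          fun m hm => (Function.update_of_ne hm _ _).symm⟩
    refine ⟨(SimpleGraph.Walk.cons hadj q).copy rfl (by rw [Function.update_idem]), ?_⟩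
    rw [SimpleGraph.Walk.length_copy, SimpleGraph.Walk.length_cons,
      SimpleGraph.Walk.length_cons]
    exact Nat.add_le_add_right hq 1

lemma dist_update_le (i : Fin k) (x : ∀ m, V m) (b : V i)
    (hr : (F i).N.Reachable (x i) b) :
    (boxPi F).N.dist x (Function.update x i b) ≤ (F i).N.dist (x i) b := by
  obtain ⟨p, hp⟩ := hr.exists_walk_length_eq_dist
  obtain ⟨q, hq⟩ := exists_walk_update F i p x rfl
  exact le_trans (SimpleGraph.dist_le q) (hp ▸ hq)

lemma dist_le_sum (hP : (boxPi F).N.Connected) (hc : ∀ m, (F m).N.Connected)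
    (s : Finset (Fin k)) :
    ∀ x y : ∀ m, V m, (∀ j, j ∉ s → x j = y j) →
      (boxPi F).N.dist x y ≤ ∑ j ∈ s, (F j).N.dist (x j) (y j) := by
  induction s using Finset.induction with
  | empty =>
    intro x y h
    have hxy : x = y := funext fun j => h j (by simp)
    simp [hxy]
  | @insert j s hjs ih =>
    intro x y h
    have h1 : (boxPi F).N.dist x (Function.update x j (y j)) ≤ (F j).N.dist (x j) (y j) :=
      dist_update_le F j x (y j) ((hc j).preconnected _ _)
    have h2 : (boxPi F).N.dist (Function.update x j (y j)) y
        ≤ ∑ m ∈ s, (F m).N.dist (Function.update x j (y j) m) (y m) := by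
      apply ih
      intro m hm
      by_cases hmj : m = j
      · subst hmj; rw [Function.update_self]
      · rw [Function.update_of_ne hmj]
        exact h m (by simp [hmj, hm])
    have h3 : ∑ m ∈ s, (F m).N.dist (Function.update x j (y j) m) (y m)
        = ∑ m ∈ s, (F m).N.dist (x m) (y m) := by
      refine Finset.sum_congr rfl fun m hm => ?_
      have hmj : m ≠ j := fun e => hjs (e ▸ hm)
      rw [Function.update_of_ne hmj]
    calc (boxPi F).N.dist x y
        ≤ (boxPi F).N.dist x (Function.update x j (y j))
          + (boxPi F).N.dist (Function.update x j (y j)) y := hP.dist_triangle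
      _ ≤ (F j).N.dist (x j) (y j) + ∑ m ∈ s, (F m).N.dist (x m) (y m) := by
          rw [← h3]; exact Nat.add_le_add h1 h2
      _ = ∑ m ∈ insert j s, (F m).N.dist (x m) (y m) := by rw [Finset.sum_insert hjs]

end Walks

end LoopGraph

namespace LoopGraph

open SimpleGraph Finset

section Convex

variable {k : ℕ} {V : Fin k → Type u} (F : ∀ i, LoopGraph (V i))

lemma layer_convex (i : Fin k) (hci : (F i).N.Connected) (a : ∀ m, V m) :
    ConvexSet (boxPi F) {x | ∀ j, j ≠ i → x j = a j} := by
  intro x hx y hy p hp z hz j hj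
  obtain ⟨f, hsum, hw, hzero⟩ := exists_proj F p
  have hyx : y = Function.update x i (y i) := by
    funext m
    by_cases hm : m = i
    · subst hm; rw [Function.update_self]
    · rw [Function.update_of_ne hm, hx m hm, hy m hm]
  have hle : (boxPi F).N.dist x y ≤ (F i).N.dist (x i) (y i) := by
    conv_lhs => rw [hyx]
    exact dist_update_le F i x (y i) (hci.preconnected _ _)
  have hfi : (F i).N.dist (x i) (y i) ≤ f i := by
    obtain ⟨q, hq⟩ := hw i
    exact hq ▸ SimpleGraph.dist_le q
  have htot : ∑ m, f m ≤ f i := by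
    calc ∑ m, f m ≤ p.length := hsum
      _ = (boxPi F).N.dist x y := hp
      _ ≤ (F i).N.dist (x i) (y i) := hle
      _ ≤ f i := hfi
  have hrest : ∑ m ∈ Finset.univ.erase i, f m = 0 := by
    have := Finset.add_sum_erase Finset.univ f (Finset.mem_univ i)
    omega
  have hfj : f j = 0 := by
    have := Finset.sum_eq_zero_iff.mp hrest j (by simp [hj])
    exact this
  rw [hzero j hfj z hz, hx j hj]

lemma convexSet_update (hP : (boxPi F).N.Connected) (hc : ∀ m, (F m).N.Connected)
    {S : Set (∀ m, V m)} (hS : ConvexSet (boxPi F) S) {x y : ∀ m, V m}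
    (hx : x ∈ S) (hy : y ∈ S) (j : Fin k) : Function.update x j (y j) ∈ S := by
  obtain ⟨p, hp⟩ := ((hc j).preconnected (x j) (y j)).exists_walk_length_eq_dist
  obtain ⟨q1, hq1⟩ := exists_walk_update F j p x rfl
  obtain ⟨q2, hq2⟩ :=
    (hP.preconnected (Function.update x j (y j)) y).exists_walk_length_eq_dist
  obtain ⟨p0, hp0⟩ := (hP.preconnected x y).exists_walk_length_eq_dist
  have hlow : ∑ m, (F m).N.dist (x m) (y m) ≤ (boxPi F).N.dist x y :=
    hp0 ▸ sum_dist_le F p0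
  have hmid : (boxPi F).N.dist (Function.update x j (y j)) y
      ≤ ∑ m ∈ Finset.univ.erase j, (F m).N.dist (Function.update x j (y j) m) (y m) := by
    refine dist_le_sum F hP hc _ _ _ fun m hm => ?_
    have hmj : m = j := by simpa using hm
    subst hmj
    rw [Function.update_self]
  have hsum_eq : ∑ m ∈ Finset.univ.erase j, (F m).N.dist (Function.update x j (y j) m) (y m)
      = ∑ m ∈ Finset.univ.erase j, (F m).N.dist (x m) (y m) := by
    refine Finset.sum_congr rfl fun m hm => ?_
    rw [Function.update_of_ne (Finset.ne_of_mem_erase hm)]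
  have hkey : (q1.append q2).length = (boxPi F).N.dist x y := by
    refine le_antisymm ?_ (SimpleGraph.dist_le _)
    rw [SimpleGraph.Walk.length_append]
    have e1 : q1.length ≤ (F j).N.dist (x j) (y j) := le_trans hq1 (le_of_eq hp)
    have e2 : q2.length ≤ ∑ m ∈ Finset.univ.erase j, (F m).N.dist (x m) (y m) := by
      rw [hq2, ← hsum_eq]; exact hmid
    have e3 : (F j).N.dist (x j) (y j) + ∑ m ∈ Finset.univ.erase j, (F m).N.dist (x m) (y m)
        = ∑ m, (F m).N.dist (x m) (y m) :=
      Finset.add_sum_erase Finset.univ (fun m => (F m).N.dist (x m) (y m)) (Finset.mem_univ j)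
    omega
  refine hS x hx y hy (q1.append q2) hkey _ ?_
  rw [SimpleGraph.Walk.support_append]
  exact List.mem_append_left _ q1.end_mem_support

lemma convexSet_pi (hP : (boxPi F).N.Connected) (hc : ∀ m, (F m).N.Connected)
    {S : Set (∀ m, V m)} (hS : ConvexSet (boxPi F) S) (s : Finset (Fin k)) :
    ∀ y : ∀ m, V m, y ∈ S → ∀ z : ∀ m, V m,
      (∀ j, j ∈ s → z j ∈ (fun w => w j) '' S) → (∀ j, j ∉ s → z j = y j) → z ∈ S := by
  induction s using Finset.induction with
  | empty =>
    intro y hy z _ h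
    have : z = y := funext fun j => h j (by simp)
    rwa [this]
  | @insert j s hjs ih =>
    intro y hy z hzC hzy
    obtain ⟨y', hy', hy'j⟩ := hzC j (Finset.mem_insert_self j s)
    have h1 : Function.update y j (y' j) ∈ S := convexSet_update F hP hc hS hy hy' j
    refine ih _ h1 z (fun m hm => hzC m (Finset.mem_insert_of_mem hm)) fun m hm => ?_
    by_cases hmj : m = j
    · subst hmj
      rw [Function.update_self]
      exact hy'j.symm
    · rw [Function.update_of_ne hmj]
      exact hzy m (by simp [hmj, hm])

end Convex

section Iso

variable {k l : ℕ} {V : Fin k → Type u} {W : Fin l → Type u}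
variable (F : ∀ i, LoopGraph (V i)) (Hf : ∀ j, LoopGraph (W j))

/-- The simple-graph isomorphism underlying a loop-graph isomorphism of products. -/
def isoN (φ : (∀ i, V i) ≃ (∀ j, W j))
    (hφ : ∀ x y, (boxPi F).adj x y ↔ (boxPi Hf).adj (φ x) (φ y)) :
    (boxPi F).N ≃g (boxPi Hf).N where
  toEquiv := φ
  map_rel_iff' := by
    intro x y
    constructor
    · rintro (⟨hne, h⟩ : _ ≠ _ ∧ _)
      exact (⟨fun he => hne (by rw [he]), (hφ x y).mpr h⟩ : x ≠ y ∧ (boxPi F).adj x y)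
    · rintro (⟨hne, h⟩ : _ ≠ _ ∧ _)
      exact (⟨fun he => hne (φ.injective he), (hφ x y).mp h⟩ : φ x ≠ φ y ∧ (boxPi Hf).adj (φ x) (φ y))

lemma iso_dist_le {A B : Type*} {GA : SimpleGraph A} {GB : SimpleGraph B} (ψ : GA ≃g GB)
    (x y : A) : GB.dist (ψ x) (ψ y) ≤ GA.dist x y := by
  by_cases hr : GA.Reachable x y
  · obtain ⟨p, hp⟩ := hr.exists_walk_length_eq_dist
    calc GB.dist (ψ x) (ψ y) ≤ (p.map ψ.toHom).length := SimpleGraph.dist_le _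
      _ = GA.dist x y := by rw [SimpleGraph.Walk.length_map]; exact hp
  · have hr' : ¬ GB.Reachable (ψ x) (ψ y) := by
      intro h
      apply hr
      have := h.map ψ.symm.toHom
      simpa using this
    rw [SimpleGraph.dist_eq_zero_of_not_reachable hr']
    exact Nat.zero_le _

lemma iso_dist {A B : Type*} {GA : SimpleGraph A} {GB : SimpleGraph B} (ψ : GA ≃g GB)
    (x y : A) : GB.dist (ψ x) (ψ y) = GA.dist x y := by
  refine le_antisymm (iso_dist_le ψ x y) ?_
  have := iso_dist_le ψ.symm (ψ x) (ψ y)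
  simpa using this

lemma convex_image (φ : (∀ i, V i) ≃ (∀ j, W j))
    (hφ : ∀ x y, (boxPi F).adj x y ↔ (boxPi Hf).adj (φ x) (φ y))
    {S : Set (∀ i, V i)} (hS : ConvexSet (boxPi F) S) :
    ConvexSet (boxPi Hf) (φ '' S) := by
  intro u hu v hv q hq z hz
  obtain ⟨u', hu', rfl⟩ := hu
  obtain ⟨v', hv', rfl⟩ := hv
  set ψ := isoN F Hf φ hφ with hψ
  have hcast1 : ψ.symm (ψ u') = u' := ψ.toEquiv.symm_apply_apply u'
  have hcast2 : ψ.symm (ψ v') = v' := ψ.toEquiv.symm_apply_apply v'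
  let q' : (boxPi F).N.Walk u' v' := (q.map ψ.symm.toHom).copy hcast1 hcast2
  have hq' : q'.length = (boxPi F).N.dist u' v' := by
    show ((q.map ψ.symm.toHom).copy hcast1 hcast2).length = _
    rw [SimpleGraph.Walk.length_copy (q.map ψ.symm.toHom) hcast1 hcast2, SimpleGraph.Walk.length_map, hq]
    exact iso_dist ψ u' v'
  have hmem : ψ.symm z ∈ q'.support := by
    simp only [q', SimpleGraph.Walk.support_copy, SimpleGraph.Walk.support_map]
    rw [SimpleGraph.Walk.support_copy (q.map ψ.symm.toHom) hcast1 hcast2, SimpleGraph.Walk.support_map]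
    exact List.mem_map_of_mem hz
  have : ψ.symm z ∈ S := hS u' hu' v' hv' q' hq' _ hmem
  exact ⟨ψ.symm z, this, ψ.toEquiv.apply_symm_apply z⟩

end Iso

end LoopGraph

namespace LoopGraph

open SimpleGraph Finset

lemma isTrivial_of_iso_s16 {A B : Type*} {X : LoopGraph A} {Y : LoopGraph B}
    (h : X.IsIsomorphic Y) (hY : Y.IsTrivial) : X.IsTrivial := by
  obtain ⟨ψ, hψ⟩ := h
  obtain ⟨⟨y0, hy0⟩, hnl⟩ := hY
  refine ⟨⟨ψ.symm y0, fun w => ?_⟩, fun v hv => hnl (ψ v) ((hψ v v).mp hv)⟩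
  apply ψ.injective
  rw [hy0 (ψ w), ψ.apply_symm_apply]

lemma exists_ne_of_irreducible {A : Type u} {X : LoopGraph A} (h : X.Irreducible) (u : A) :
    ∃ v : A, v ≠ u := by
  by_contra hc
  push_neg at hc
  obtain ⟨v0, hv0⟩ := h.2.2.1
  exact h.1 ⟨⟨u, hc⟩, fun v hv => hv0 (((hc v).trans (hc v0).symm) ▸ hv)⟩

lemma adj_update_iff {k : ℕ} {V : Fin k → Type u} (G : ∀ i, LoopGraph (V i)) {a : ∀ i, V i}
    (ha : ¬ (boxPi G).adj a a) (i : Fin k) (v v' : V i) :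
    (G i).adj v v' ↔ (boxPi G).adj (Function.update a i v) (Function.update a i v') := by
  constructor
  · intro h
    exact ⟨i, by rwa [Function.update_self, Function.update_self],
      fun j hj => by rw [Function.update_of_ne hj, Function.update_of_ne hj]⟩
  · rintro ⟨m, hm, he⟩
    by_cases hmi : m = i
    · subst hmi
      rwa [Function.update_self, Function.update_self] at hm
    · exfalso
      apply ha
      rw [Function.update_of_ne hmi, Function.update_of_ne hmi] at hm
      exact ⟨m, hm, fun j hj => rfl⟩

lemma main_step {k l : ℕ} {V : Fin k → Type u} {W : Fin l → Type u}
    (G : ∀ i, LoopGraph (V i)) (H : ∀ j, LoopGraph (W j))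
    (hGirr : ∀ i, (G i).Irreducible) (hHirr : ∀ j, (H j).Irreducible)
    (hHconn : (boxPi H).N.Connected)
    (φ : (∀ i, V i) ≃ (∀ j, W j))
    (hφ : ∀ x y, (boxPi G).adj x y ↔ (boxPi H).adj (φ x) (φ y))
    (a : ∀ i, V i) (ha : ¬ (boxPi G).adj a a) (i : Fin k) :
    ∃ m : Fin l, ∀ y ∈ φ '' {x | ∀ j, j ≠ i → x j = a j}, ∀ j, j ≠ m → y j = φ a j := by
  classical
  set L : Set (∀ i, V i) := {x | ∀ j, j ≠ i → x j = a j} with hLdef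
  set S : Set (∀ j, W j) := φ '' L with hSdef
  have hcH : ∀ m, (H m).N.Connected := fun m => (hHirr m).2.1
  have hLconv : ConvexSet (boxPi G) L := layer_convex G i (hGirr i).2.1 a
  have hSconv : ConvexSet (boxPi H) S := convex_image G H φ hφ hLconv
  set C : ∀ j, Set (W j) := fun j => (fun w => w j) '' S with hCdef
  have haL : a ∈ L := fun j _ => rfl
  have haS : φ a ∈ S := ⟨a, haL, rfl⟩
  have hbox : ∀ z : ∀ j, W j, (∀ j, z j ∈ C j) → z ∈ S := fun z hz =>
    convexSet_pi H hHconn hcH hSconv Finset.univ (φ a) haS z (fun j _ => hz j)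
      (fun j hj => absurd (Finset.mem_univ j) hj)
  set Kind : ∀ j, LoopGraph (C j) := fun j =>
    ⟨fun c c' => (H j).adj c.1 c'.1, fun c c' h => (H j).symm _ _ h⟩ with hKinddef
  -- membership of layer points
  have hmemL : ∀ v : V i, Function.update a i v ∈ L :=
    fun v j hj => Function.update_of_ne hj _ _
  have hyS : ∀ v : V i, φ (Function.update a i v) ∈ S := fun v => ⟨_, hmemL v, rfl⟩
  have hyC : ∀ (v : V i) (j : Fin l), φ (Function.update a i v) j ∈ C j :=
    fun v j => ⟨_, hyS v, rfl⟩
  -- if Kind j is trivial then all points of S agree in coordinate j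
  have coordeq : ∀ j, (Kind j).IsTrivial → ∀ y ∈ S, ∀ y' ∈ S, y j = y' j := by
    intro j hj y hy y' hy'
    obtain ⟨⟨c0, hc0⟩, -⟩ := hj
    have h1 : (⟨y j, ⟨y, hy, rfl⟩⟩ : C j) = c0 := hc0 _
    have h2 : (⟨y' j, ⟨y', hy', rfl⟩⟩ : C j) = c0 := hc0 _
    exact congrArg Subtype.val (h1.trans h2.symm)
  -- main dichotomy via irreducibility of G i
  have main : ∀ j0 : Fin l, (Kind j0).IsTrivial ∨ ∀ j1, j1 ≠ j0 → (Kind j1).IsTrivial := by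
    intro j0
    -- the complementary factor
    set R : LoopGraph (∀ j : {j : Fin l // j ≠ j0}, C j.1) :=
      ⟨fun r r' => ∃ j, (H j.1).adj (r j).1 (r' j).1 ∧ ∀ j', j' ≠ j → r j' = r' j',
       fun r r' h => by
        obtain ⟨j, h1, h2⟩ := h
        exact ⟨j, (H j.1).symm _ _ h1, fun j' hj' => (h2 j' hj').symm⟩⟩ with hRdef
    -- the glued point
    set Z : C j0 → (∀ j : {j : Fin l // j ≠ j0}, C j.1) → (∀ j, W j) := fun c r =>
      Function.update (fun j => if h : j = j0 then φ a j else (r ⟨j, h⟩).1) j0 c.1 with hZdef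
    have hZ0 : ∀ c r, Z c r j0 = c.1 := fun c r => Function.update_self _ _ _
    have hZne : ∀ c r (j : Fin l) (h : j ≠ j0), Z c r j = (r ⟨j, h⟩).1 := by
      intro c r j h
      rw [hZdef]
      simp only [Function.update_of_ne h, dif_neg h]
    have hZS : ∀ c r, Z c r ∈ S := by
      intro c r
      apply hbox
      intro j
      by_cases h : j = j0
      · subst h
        rw [hZ0]
        exact c.2
      · rw [hZne c r j h]
        exact (r ⟨j, h⟩).2
    -- the equivalence
    set eFun : V i → C j0 × ∀ j : {j : Fin l // j ≠ j0}, C j.1 := fun v =>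
      (⟨φ (Function.update a i v) j0, hyC v j0⟩,
        fun j => ⟨φ (Function.update a i v) j.1, hyC v j.1⟩) with heFun
    have hZe : ∀ v, Z (eFun v).1 (eFun v).2 = φ (Function.update a i v) := by
      intro v
      funext j
      by_cases h : j = j0
      · subst h; rw [hZ0]
      · rw [hZne _ _ j h]
    set eInv : (C j0 × ∀ j : {j : Fin l // j ≠ j0}, C j.1) → V i := fun p =>
      φ.symm (Z p.1 p.2) i with heInv
    have hLeft : ∀ v, eInv (eFun v) = v := by
      intro v
      rw [heInv]
      simp only
      rw [hZe v, φ.symm_apply_apply, Function.update_self]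
    have hRight : ∀ p, eFun (eInv p) = p := by
      rintro ⟨c, r⟩
      obtain ⟨x, hxL, hxz⟩ := hZS c r
      have hsymm : φ.symm (Z c r) = x := by rw [← hxz, φ.symm_apply_apply]
      have hxup : Function.update a i (x i) = x := by
        funext j
        by_cases hj : j = i
        · subst hj; rw [Function.update_self]
        · rw [Function.update_of_ne hj]; exact (hxL j hj).symm
      have hφx : φ (Function.update a i (eInv (c, r))) = Z c r := by
        show φ (Function.update a i (φ.symm (Z c r) i)) = Z c r
        rw [hsymm, hxup, hxz]
      refine Prod.ext ?_ ?_
      · exact Subtype.ext (by rw [heFun]; simp only; rw [hφx, hZ0])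
      · funext j
        exact Subtype.ext (by rw [heFun]; simp only; rw [hφx, hZne c r j.1 j.2])
    set e : V i ≃ (C j0 × ∀ j : {j : Fin l // j ≠ j0}, C j.1) :=
      ⟨eFun, eInv, hLeft, hRight⟩ with hedef
    have hiso : ∀ v v', (G i).adj v v' ↔ ((Kind j0).box R).adj (e v) (e v') := by
      intro v v'
      rw [adj_update_iff G ha i v v', hφ]
      show (boxPi H).adj (φ (Function.update a i v)) (φ (Function.update a i v'))
        ↔ ((Kind j0).box R).adj (eFun v) (eFun v')
      set y := φ (Function.update a i v) with hy
      set y' := φ (Function.update a i v') with hy'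
      constructor
      · rintro ⟨mm, hmm, hee⟩
        by_cases hmj : mm = j0
        · subst hmj
          refine Or.inl ⟨hmm, funext fun j => Subtype.ext ?_⟩
          exact hee j.1 j.2
        · refine Or.inr ⟨Subtype.ext (hee j0 (Ne.symm hmj)), ⟨mm, hmj⟩, hmm, ?_⟩
          intro j' hj'
          refine Subtype.ext ?_
          refine hee j'.1 fun hc => hj' (Subtype.ext hc)
      · rintro (⟨hadj, heq⟩ | ⟨heq, ⟨jj, hjne⟩, hadj, hee⟩)
        · refine ⟨j0, hadj, fun j hj => ?_⟩
          exact congrArg Subtype.val (congrFun heq ⟨j, hj⟩)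
        · refine ⟨jj, hadj, fun j hj => ?_⟩
          by_cases h : j = j0
          · subst h
            exact congrArg Subtype.val heq
          · exact congrArg Subtype.val
              (hee ⟨j, h⟩ fun hc => hj (congrArg Subtype.val hc))
    have hor := (hGirr i).2.2.2 _ _ (Kind j0) R ⟨e, hiso⟩
    rcases hor with h | h
    · exact Or.inl h
    · right
      intro j1 hne1
      obtain ⟨⟨r0, hr0⟩, hnl⟩ := h
      refine ⟨⟨r0 ⟨j1, hne1⟩, fun c => ?_⟩, fun c hc => ?_⟩
      · have := hr0 (Function.update r0 ⟨j1, hne1⟩ c)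
        have h2 := congrFun this ⟨j1, hne1⟩
        rwa [Function.update_self] at h2
      · apply hnl (Function.update r0 ⟨j1, hne1⟩ c)
        refine ⟨⟨j1, hne1⟩, ?_, fun j' hj' => rfl⟩
        rw [Function.update_self]
        exact hc
  have nonall : ¬ ∀ j, (Kind j).IsTrivial := by
    intro hall
    obtain ⟨v, hv⟩ := exists_ne_of_irreducible (hGirr i) (a i)
    have hx : Function.update a i v ∈ L := hmemL v
    have hne : Function.update a i v ≠ a := by
      intro h
      apply hv
      rw [← Function.update_self i v a]
      rw [h]
    have : φ (Function.update a i v) = φ a := by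
      funext j
      exact coordeq j (hall j) _ (hyS v) _ haS
    exact hne (φ.injective this)
  obtain ⟨m, hm⟩ := not_forall.mp nonall
  refine ⟨m, ?_⟩
  intro y hy j hj
  have h1 : (Kind j).IsTrivial := by
    rcases main m with h | h
    · exact absurd h hm
    · exact h j hj
  exact coordeq j h1 y hy _ haS

end LoopGraph

/-- Isomorphisms permute layers: an isomorphism between products of
irreducible graphs maps layers through an unlooped vertex onto layers. -/
theorem iso_permutes_layers {k l : ℕ} {V : Fin k → Type u} {W : Fin l → Type u}
    [∀ i, Fintype (V i)] [∀ j, Fintype (W j)]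
    (G : ∀ i, LoopGraph (V i)) (H : ∀ j, LoopGraph (W j))
    (hGirr : ∀ i, (G i).Irreducible) (hHirr : ∀ j, (H j).Irreducible)
    (hGnt : ¬ (LoopGraph.boxPi G).IsTrivial)
    (hGconn : (LoopGraph.boxPi G).N.Connected)
    (hGul : ∃ v, ¬ (LoopGraph.boxPi G).adj v v)
    (hHnt : ¬ (LoopGraph.boxPi H).IsTrivial)
    (hHconn : (LoopGraph.boxPi H).N.Connected)
    (hHul : ∃ w, ¬ (LoopGraph.boxPi H).adj w w)
    (φ : (∀ i, V i) ≃ (∀ j, W j))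
    (hφ : ∀ x y, (LoopGraph.boxPi G).adj x y ↔
      (LoopGraph.boxPi H).adj (φ x) (φ y)) :
    k = l ∧
      ∀ a : ∀ i, V i, ¬ (LoopGraph.boxPi G).adj a a →
        ∃ π : Fin k ≃ Fin l, ∀ i : Fin k,
          φ '' {x | ∀ j, j ≠ i → x j = a j}
            = {y | ∀ j, j ≠ π i → y j = φ a j} := by
  classical
  have hφ' : ∀ u v, (LoopGraph.boxPi H).adj u v ↔
      (LoopGraph.boxPi G).adj (φ.symm u) (φ.symm v) := by
    intro u v
    rw [hφ (φ.symm u) (φ.symm v), φ.apply_symm_apply, φ.apply_symm_apply]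
  have step : ∀ a : ∀ i, V i, ¬(LoopGraph.boxPi G).adj a a →
      ∃ π : Fin k ≃ Fin l, ∀ i : Fin k,
        φ '' {x | ∀ j, j ≠ i → x j = a j} = {y | ∀ j, j ≠ π i → y j = φ a j} := by
    intro a ha
    have hb : ¬ (LoopGraph.boxPi H).adj (φ a) (φ a) := fun h => ha ((hφ a a).mpr h)
    choose σ hσ using fun i =>
      LoopGraph.main_step G H hGirr hHirr hHconn φ hφ a ha i
    choose τ hτ0 using fun m =>
      LoopGraph.main_step H G hHirr hGirr hGconn φ.symm hφ' (φ a) hb m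
    have hτ : ∀ m, ∀ y ∈ φ.symm '' {x | ∀ j, j ≠ m → x j = φ a j},
        ∀ j, j ≠ τ m → y j = a j := by
      intro m y hy j hj
      have := hτ0 m y hy j hj
      rwa [φ.symm_apply_apply] at this
    have hST : ∀ i, τ (σ i) = i := by
      intro i
      by_contra hne
      obtain ⟨v, hv⟩ := LoopGraph.exists_ne_of_irreducible (hGirr i) (a i)
      have hx : Function.update a i v ∈ {x | ∀ j, j ≠ i → x j = a j} :=
        fun j hj => Function.update_of_ne hj _ _
      have h1 : φ (Function.update a i v) ∈ {x | ∀ j, j ≠ σ i → x j = φ a j} :=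
        fun j hj => hσ i _ ⟨_, hx, rfl⟩ j hj
      have h2 := hτ (σ i) (φ.symm (φ (Function.update a i v)))
        ⟨_, h1, rfl⟩ i (fun h => hne h.symm)
      rw [φ.symm_apply_apply, Function.update_self] at h2
      exact hv h2
    have hTS : ∀ m, σ (τ m) = m := by
      intro m
      by_contra hne
      obtain ⟨w, hw⟩ := LoopGraph.exists_ne_of_irreducible (hHirr m) (φ a m)
      have hy : Function.update (φ a) m w ∈ {x | ∀ j, j ≠ m → x j = φ a j} :=
        fun j hj => Function.update_of_ne hj _ _
      have h1 : φ.symm (Function.update (φ a) m w) ∈ {x | ∀ j, j ≠ τ m → x j = a j} :=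
        fun j hj => hτ m _ ⟨_, hy, rfl⟩ j hj
      have h2 := hσ (τ m) (φ (φ.symm (Function.update (φ a) m w)))
        ⟨_, h1, rfl⟩ m (fun h => hne h.symm)
      rw [φ.apply_symm_apply, Function.update_self] at h2
      exact hw h2
    refine ⟨⟨σ, τ, hST, hTS⟩, ?_⟩
    intro i
    apply Set.Subset.antisymm
    · rintro y ⟨x, hx, rfl⟩
      exact fun j hj => hσ i (φ x) ⟨x, hx, rfl⟩ j hj
    · intro y hy
      have h1 : φ.symm y ∈ {x | ∀ j, j ≠ i → x j = a j} := by
        intro j hj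
        have hj' : j ≠ τ (σ i) := by rwa [hST i]
        exact hτ (σ i) (φ.symm y) ⟨y, hy, rfl⟩ j hj'
      exact ⟨φ.symm y, h1, φ.apply_symm_apply y⟩
  constructor
  · obtain ⟨a, ha⟩ := hGul
    obtain ⟨π, _⟩ := step a ha
    have := Fintype.card_congr π
    simpa using this
  · exact step
end

section
/- The number of nontrivial factors in a Cartesian product decomposition of a connected graph is bounded by every vertex degree: if G = □_{i : Fin k} G i is a finite graph with loops such that N(G) is connected and every factor G i has at least two vertices, then for every vertex v of G, k is at most the degree of v in the simple graph N(G). In particular, k is at most the minimum degree of N(G). -/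
universe u

/-- if `N(□_i G i)` is connected and every factor has at least two
vertices, then the number of factors is at most the degree of every vertex in the
simple graph `N(□_i G i)`. -/
theorem num_factors_le_degree {k : ℕ} {V : Fin k → Type*} [∀ i, Fintype (V i)]
    (G : ∀ i, LoopGraph (V i))
    (hconn : (LoopGraph.boxPi G).N.Connected)
    (hcard : ∀ i, 1 < Fintype.card (V i)) :
    ∀ v : ∀ i, V i, k ≤ {w | (LoopGraph.boxPi G).N.Adj v w}.ncard := by
  intro v
  classical
  have hnbr : ∀ i, ∃ w, w ≠ v i ∧ (G i).adj (v i) w := by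
    intro i
    by_contra h
    push_neg at h
    obtain ⟨u, hu⟩ := Fintype.exists_ne_of_one_lt_card (hcard i) (v i)
    have step : ∀ a b : ∀ j, V j, (LoopGraph.boxPi G).N.Adj a b → a i = v i → b i = v i := by
      rintro a b ⟨hne, j, hadj, heq⟩ hai
      by_cases hji : j = i
      · subst hji
        rw [hai] at hadj
        by_contra hb
        exact h _ hb hadj
      · rw [← heq i (fun hc => hji hc.symm), hai]
    have inv : ∀ (a b : ∀ j, V j) (p : (LoopGraph.boxPi G).N.Walk a b),
        a i = v i → b i = v i := by
      intro a b p
      induction p with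
      | nil => exact fun h => h
      | cons hadj q ih => exact fun ha => ih (step _ _ hadj ha)
    obtain ⟨p⟩ := hconn.preconnected v (Function.update v i u)
    have := inv _ _ p rfl
    rw [Function.update_self] at this
    exact hu this
  choose w hw hadj using hnbr
  set f : Fin k → (∀ j, V j) := fun i => Function.update v i (w i) with hf
  have hinj : Function.Injective f := by
    intro i j hij
    by_contra hne
    have := congrFun hij i
    rw [hf] at this
    simp only [Function.update_self, Function.update_of_ne hne] at this
    exact hw i this
  have hsub : Set.range f ⊆ {x | (LoopGraph.boxPi G).N.Adj v x} := by
    rintro _ ⟨i, rfl⟩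
    refine ⟨fun hc => hw i ?_, i, ?_, fun j hj => ?_⟩
    · have := congrFun hc i
      rw [hf] at this
      simpa using this.symm
    · simpa [hf] using hadj i
    · simp [hf, Function.update_of_ne hj]
  calc k = Nat.card (Fin k) := by simp
    _ = Nat.card (Set.range f) := (Nat.card_range_of_injective hinj).symm
    _ = (Set.range f).ncard := Nat.card_coe_set_eq _
    _ ≤ _ := Set.ncard_le_ncard hsub (Set.toFinite _)
end
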